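/- Let (A,E) be a C*-probability space with filtration (A_t)_{t≥0}, and let p,q ∈ [1,∞] satisfy 1/p + 1/q ≤ 1. If M : ℝ≥0 → L^p(A,E) ∩ L^q(A,E) is a martingale that is continuous with respect to the L^p-norm and has locally bounded variation with respect to the L^q-norm, then M is constant: M(t) = M(0) for all t ≥ 0. -/

import Mathlib

open scoped NNReal ENNReal

/-- **A continuous martingale of finite variation is constant** (Proposition `prop.FVmart`).
Setting: a filtered C*-probability space `(A, (A_t)_{t≥0}, E)`, with `H = L²(A,E)` its
noncommutative `L²`-space (a complex Hilbert space), `V t = L²(A_t,E)` the closed subspaces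
induced by the filtration, and conditional expectations acting on `L²` as the orthogonal
projections onto `V t`.  The noncommutative `L^p`- and `L^q`-norms (restricted to
`L^p(E) ∩ L^q(E) ⊆ L²(E)`, which contains the range of `M`) are `Np` and `Nq`; by
noncommutative Hölder's inequality, `1/p + 1/q ≤ 1` yields
`‖x‖₂² = ‖x⋆x‖₁ ≤ ‖x‖_p · ‖x‖_q` (hypothesis `hHolder`).  If the martingale `M` is
`L^p`-continuous and has locally bounded variation with respect to the `L^q`-norm, then
`M t = M 0` for all `t ≥ 0`. -/
theorem continuous_finite_variation_martingale_constant
    {H : Type*} [NormedAddCommGroup H] [InnerProductSpace ℂ H]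
    (V : ℝ≥0 → Submodule ℂ H) (hV : Monotone V) [∀ t, CompleteSpace (V t)]
    (p q : ℝ≥0∞) (hp : 1 ≤ p) (hq : 1 ≤ q) (hpq : 1 / p + 1 / q ≤ 1)
    (Np Nq : H → ℝ)
    (hNp_nonneg : ∀ x, 0 ≤ Np x) (hNq_nonneg : ∀ x, 0 ≤ Nq x)
    (hNp_neg : ∀ x, Np (-x) = Np x) (hNq_neg : ∀ x, Nq (-x) = Nq x)
    (hNp_add : ∀ x y, Np (x + y) ≤ Np x + Np y)
    (hNq_add : ∀ x y, Nq (x + y) ≤ Nq x + Nq y)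
    (hHolder : ∀ x : H, ‖x‖ ^ 2 ≤ Np x * Nq x)
    (M : ℝ≥0 → H)
    (hmart : ∀ s t : ℝ≥0, s ≤ t → ((V s).orthogonalProjectionOnto (M t) : H) = M s)
    (hcont : ∀ t : ℝ≥0, ∀ ε > (0 : ℝ), ∃ δ > (0 : ℝ), ∀ s : ℝ≥0,
      dist s t < δ → Np (M s - M t) < ε)
    (hBV : ∀ t : ℝ≥0, ∃ C : ℝ, ∀ (n : ℕ) (u : Fin (n + 1) → ℝ≥0),
      Monotone u → u 0 = 0 → u (Fin.last n) = t →
      ∑ i : Fin n, Nq (M (u i.succ) - M (u i.castSucc)) ≤ C)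
    (t : ℝ≥0) :
    M t = M 0 := by
  classical
  -- The martingale lives in the filtration
  have hmem : ∀ s : ℝ≥0, M s ∈ V s := by
    intro s
    have h := hmart s s le_rfl
    rw [← h]
    exact ((V s).orthogonalProjectionOnto (M s)).2
  -- increments are orthogonal to the past
  have horth : ∀ s u : ℝ≥0, s ≤ u → M u - M s ∈ (V s)ᗮ := by
    intro s u hsu
    have h := Submodule.sub_starProjection_mem_orthogonal (K := V s) (M u)
    rw [Submodule.starProjection_apply] at h
    rwa [hmart s u hsu] at h
  -- Pythagoras for martingale increments
  have pyth : ∀ (v : ℕ → ℝ≥0), Monotone v → ∀ k : ℕ,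
      ‖M (v k) - M (v 0)‖ ^ 2 = ∑ i ∈ Finset.range k, ‖M (v (i + 1)) - M (v i)‖ ^ 2 := by
    intro v hv k
    induction k with
    | zero => simp
    | succ k ih =>
      rw [Finset.sum_range_succ, ← ih]
      have hsplit : M (v (k + 1)) - M (v 0)
          = (M (v k) - M (v 0)) + (M (v (k + 1)) - M (v k)) := by abel
      have hz : (inner ℂ (M (v k) - M (v 0)) (M (v (k + 1)) - M (v k)) : ℂ) = 0 := by
        have h1 : M (v k) - M (v 0) ∈ V (v k) :=
          Submodule.sub_mem _ (hmem _) (hV (hv (Nat.zero_le k)) (hmem _))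
        exact (Submodule.mem_orthogonal _ _).1 (horth (v k) (v (k + 1)) (hv (Nat.le_succ k)))
          _ h1
      rw [hsplit, norm_add_sq (𝕜 := ℂ), hz]
      simp
  -- uniform Lᵖ-continuity on [0, t]
  have key : ∀ ε : ℝ, 0 < ε → ∃ δ : ℝ, 0 < δ ∧ ∀ a b : ℝ≥0,
      a ≤ t → b ≤ t → dist a b < δ → Np (M a - M b) < ε := by
    intro ε hε
    choose δ hδpos hδ using fun s : ℝ≥0 => hcont s (ε / 2) (by positivity)
    have hcover : Set.Icc (0 : ℝ≥0) t ⊆ ⋃ s : ℝ≥0, Metric.ball s (δ s / 2) := by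
      intro a _
      exact Set.mem_iUnion.2 ⟨a, by simp [Metric.mem_ball, half_pos (hδpos a)]⟩
    obtain ⟨S, hS⟩ := (isCompact_Icc (a := (0 : ℝ≥0)) (b := t)).elim_finite_subcover
      (fun s : ℝ≥0 => Metric.ball s (δ s / 2)) (fun s => Metric.isOpen_ball) hcover
    have hSne : S.Nonempty := by
      rcases Set.mem_iUnion₂.1 (hS ⟨le_rfl, (zero_le : (0:ℝ≥0) ≤ t)⟩) with ⟨s, hs, -⟩
      exact ⟨s, hs⟩
    refine ⟨S.inf' hSne fun s => δ s / 2, ?_, ?_⟩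
    · exact (Finset.lt_inf'_iff hSne).2 fun s _ => half_pos (hδpos s)
    · intro a b ha hb hab
      rcases Set.mem_iUnion₂.1 (hS ⟨(zero_le : (0:ℝ≥0) ≤ a), ha⟩) with ⟨s, hsS, hsb⟩
      have has : dist a s < δ s / 2 := hsb
      have hbs : dist b s < δ s := by
        calc dist b s ≤ dist b a + dist a s := dist_triangle _ _ _
          _ < S.inf' hSne (fun s => δ s / 2) + δ s / 2 := by
              rw [dist_comm]; exact add_lt_add hab has
          _ ≤ δ s / 2 + δ s / 2 := by
              gcongr; exact Finset.inf'_le _ hsS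
          _ = δ s := by ring
      have h1 : Np (M a - M s) < ε / 2 := hδ s a (lt_of_lt_of_le has (by linarith [hδpos s]))
      have h2 : Np (M b - M s) < ε / 2 := hδ s b hbs
      have hdecomp : M a - M b = (M a - M s) + -(M b - M s) := by abel
      calc Np (M a - M b) ≤ Np (M a - M s) + Np (-(M b - M s)) := by
            rw [hdecomp]; exact hNp_add _ _
        _ = Np (M a - M s) + Np (M b - M s) := by rw [hNp_neg]
        _ < ε / 2 + ε / 2 := add_lt_add h1 h2
        _ = ε := by ring
  -- total variation bound
  obtain ⟨C, hC⟩ := hBV t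
  have hC0 : 0 ≤ C := by
    have hu : Monotone ![(0 : ℝ≥0), t] := by
      intro a b hab
      fin_cases a <;> fin_cases b <;> simp_all <;> first | exact zero_le t | exact absurd hab (by simp)
    have := hC 1 ![0, t] hu rfl rfl
    refine le_trans ?_ this
    refine Finset.sum_nonneg fun i _ => hNq_nonneg _
  -- main estimate : ‖M t - M 0‖² ≤ ε for every ε > 0
  have main : ∀ ε : ℝ, 0 < ε → ‖M t - M 0‖ ^ 2 ≤ 0 + ε := by
    intro ε hε
    set ε' : ℝ := ε / (C + 1) with hε'def
    have hε' : 0 < ε' := by positivity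
    obtain ⟨δ, hδ, hfine⟩ := key ε' hε'
    -- choose a fine uniform partition
    set n : ℕ := ⌈(t : ℝ) / δ⌉₊ + 1 with hn
    have hn0 : (0 : ℝ) < n := by positivity
    have hnn : ((n : ℝ≥0) : ℝ) ≠ 0 := by push_cast; positivity
    have hnN : (n : ℝ≥0) ≠ 0 := by simp [hn]
    set v : ℕ → ℝ≥0 := fun i => t * (min i n : ℕ) / n with hv
    have hvmono : Monotone v := by
      intro a b hab
      have h : ((min a n : ℕ) : ℝ≥0) ≤ ((min b n : ℕ) : ℝ≥0) := by
        exact_mod_cast min_le_min hab (le_refl n)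
      simp only [hv]
      gcongr
    have hv0 : v 0 = 0 := by simp [hv]
    have hvn : v n = t := by
      simp only [hv, min_self]
      exact mul_div_cancel_right₀ t hnN
    have hvle : ∀ i, v i ≤ t := by
      intro i
      have h : ((min i n : ℕ) : ℝ≥0) ≤ ((n : ℕ) : ℝ≥0) := by
        exact_mod_cast min_le_right i n
      calc v i = t * (min i n : ℕ) / n := rfl
        _ ≤ t * (n : ℕ) / n := by gcongr
        _ = t := mul_div_cancel_right₀ t hnN
    have hstep : ∀ i : ℕ, i < n → dist (v (i + 1)) (v i) < δ := by
      intro i hi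
      have h1 : min (i + 1) n = i + 1 := min_eq_left hi
      have h2 : min i n = i := min_eq_left hi.le
      have hcast : (dist (v (i + 1)) (v i) : ℝ)
          = |(t : ℝ) * (i + 1) / n - (t : ℝ) * i / n| := by
        rw [NNReal.dist_eq]
        simp only [hv, h1, h2]
        push_cast
        ring_nf
      rw [hcast]
      have : (t : ℝ) * (i + 1) / n - (t : ℝ) * i / n = (t : ℝ) / n := by
        field_simp; ring
      rw [this, abs_of_nonneg (by positivity)]
      rw [div_lt_iff₀ hn0]
      have htn : (t : ℝ) / δ < n := by
        calc (t : ℝ) / δ ≤ ⌈(t : ℝ) / δ⌉₊ := Nat.le_ceil _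
          _ < n := by exact_mod_cast Nat.lt_succ_self _
      calc (t : ℝ) = (t : ℝ) / δ * δ := by field_simp
        _ < n * δ := by exact mul_lt_mul_of_pos_right htn hδ
        _ = δ * n := by ring
    -- apply Pythagoras and the bounds
    have hpy : ‖M t - M 0‖ ^ 2
        = ∑ i ∈ Finset.range n, ‖M (v (i + 1)) - M (v i)‖ ^ 2 := by
      have := pyth v hvmono n
      rwa [hvn, hv0] at this
    have hbound : ∑ i ∈ Finset.range n, ‖M (v (i + 1)) - M (v i)‖ ^ 2
        ≤ ε' * ∑ i ∈ Finset.range n, Nq (M (v (i + 1)) - M (v i)) := by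
      rw [Finset.mul_sum]
      refine Finset.sum_le_sum fun i hi => ?_
      have hi' := Finset.mem_range.1 hi
      have hNp : Np (M (v (i + 1)) - M (v i)) < ε' :=
        hfine (v (i + 1)) (v i) (hvle _) (hvle _) (hstep i hi')
      calc ‖M (v (i + 1)) - M (v i)‖ ^ 2
          ≤ Np (M (v (i + 1)) - M (v i)) * Nq (M (v (i + 1)) - M (v i)) := hHolder _
        _ ≤ ε' * Nq (M (v (i + 1)) - M (v i)) :=
            mul_le_mul_of_nonneg_right hNp.le (hNq_nonneg _)
    have hvar : ∑ i ∈ Finset.range n, Nq (M (v (i + 1)) - M (v i)) ≤ C := by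
      have hu : Monotone (fun i : Fin (n + 1) => v i) := fun a b hab => hvmono hab
      have := hC n (fun i : Fin (n + 1) => v i) hu (by simpa using hv0)
        (by simpa [Fin.last] using hvn)
      rw [← Fin.sum_univ_eq_sum_range (fun i => Nq (M (v (i + 1)) - M (v i))) n]
      exact this
    calc ‖M t - M 0‖ ^ 2 ≤ ε' * C := by
          rw [hpy]; exact hbound.trans (mul_le_mul_of_nonneg_left hvar hε'.le)
      _ ≤ ε' * (C + 1) := by nlinarith
      _ = ε := by
          rw [hε'def]
          have h1 : C + 1 ≠ 0 := by positivity
          field_simp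
      _ = 0 + ε := by ring
  have hle : ‖M t - M 0‖ ^ 2 ≤ 0 := le_of_forall_pos_le_add main
  have : M t - M 0 = 0 := by
    have := sq_nonneg ‖M t - M 0‖
    have h0 : ‖M t - M 0‖ ^ 2 = 0 := le_antisymm hle this
    have := pow_eq_zero_iff (n := 2) (by norm_num) |>.1 h0
    exact norm_eq_zero.1 this
  exact sub_eq_zero.1 this
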